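/- For every positive integer m and N = 8m, the polynomial f(x) = x + 2m·x² mod N is a permutation of ℤ_N. -/
import Mathlib


/-- For N = 8m, f(x) = x + 2m·x² is a permutation of ℤ_N. -/
theorem qpp_exists_multiple_of_eight (m : ℕ) (hm : 0 < m) :
    Function.Bijective (fun x : ZMod (8 * m) => x + (2 * m : ℕ) * x ^ 2) := by
  have h8 : ((8 * m : ℕ) : ZMod (8 * m)) = 0 := ZMod.natCast_self _
  push_cast at h8
  refine Function.bijective_iff_has_inverse.mpr
    ⟨fun x => x - (2 * m : ℕ) * x ^ 2, fun x => ?_, fun x => ?_⟩ 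
  · simp only
    push_cast
    linear_combination (-(↑m * x^3) - 2 * ↑m^2 * x^4 - ↑m * x^4 * 2 * ↑m + 3 * ↑m^2 * x^4) * h8
  · simp only
    push_cast
    linear_combination (-(↑m * x^3) - 2 * ↑m^2 * x^4 - ↑m * x^4 * 2 * ↑m + 5 * ↑m^2 * x^4) * h8
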